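/- If f is twice differentiable on an open interval containing [a,b] with f'' bounded and integrable, then |∫_a^b f(t) dt - [(√2/8) f(a) + (1 - √2/4) f((a+b)/2) + (√2/8) f(b)](b-a)| ≤ ((2 - √2)/48) · sup_{t ∈ [a,b]} |f''(t)| · (b-a)³. -/

import Mathlib

open MeasureTheory Real Set

set_option maxHeartbeats 2000000 in
theorem stmt_6 (f f' f'' : ℝ → ℝ) (a b c d : ℝ) (hab : a < b)
    (hsub : Icc a b ⊆ Ioo c d)
    (hd1 : ∀ t ∈ Ioo c d, HasDerivAt f (f' t) t)
    (hd2 : ∀ t ∈ Ioo c d, HasDerivAt f' (f'' t) t)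
    (hbd : ∃ M, ∀ t ∈ Ioo c d, |f'' t| ≤ M)
    (hint : IntervalIntegrable f'' volume a b) :
    |(∫ t in a..b, f t)
        - (Real.sqrt 2 / 8 * f a + (1 - Real.sqrt 2 / 4) * f ((a + b) / 2)
            + Real.sqrt 2 / 8 * f b) * (b - a)|
      ≤ (2 - Real.sqrt 2) / 48 * sSup ((fun t => |f'' t|) '' Icc a b) * (b - a)^3 := by
  obtain ⟨M0, hM0⟩ := hbd
  set s2 := Real.sqrt 2 with hs2def
  have hs2 : s2 ^ 2 = 2 := Real.sq_sqrt (by norm_num)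
  have hs2pos : 0 < s2 := Real.sqrt_pos.mpr (by norm_num)
  have hs2lt : s2 < 2 := by nlinarith
  have hh : (0:ℝ) < b - a := sub_pos.mpr hab
  set m : ℝ := (a + b) / 2 with hmdef
  set w : ℝ := s2 * (b - a) / 8 with hwdef
  clear_value s2 m w
  have hw : 0 < w := by rw [hwdef]; positivity
  set p : ℝ := a + 2 * w with hpdef
  set q : ℝ := b - 2 * w with hqdef
  clear_value p q
  have hap : a ≤ p := by rw [hpdef]; nlinarith
  have hpm : p ≤ m := by rw [hpdef, hmdef, hwdef]; nlinarith
  have hmq : m ≤ q := by rw [hqdef, hmdef, hwdef]; nlinarith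
  have hqb : q ≤ b := by rw [hqdef]; nlinarith
  have ham : a ≤ m := le_trans hap hpm
  have hmb : m ≤ b := le_trans hmq hqb
  set K1 : ℝ → ℝ := fun t => (t - a) ^ 2 / 2 - w * (t - a) with hK1def
  set K2 : ℝ → ℝ := fun t => (b - t) ^ 2 / 2 - w * (b - t) with hK2def
  clear_value K1 K2
  have hK1c : Continuous K1 := by rw [hK1def]; continuity
  have hK2c : Continuous K2 := by rw [hK2def]; continuity
  -- membership lemmas
  have hIccm1 : Icc a m ⊆ Icc a b := Icc_subset_Icc le_rfl hmb
  have hIccm2 : Icc m b ⊆ Icc a b := Icc_subset_Icc ham le_rfl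
  have huam : uIcc a m = Icc a m := uIcc_of_le ham
  have humb : uIcc m b = Icc m b := uIcc_of_le hmb
  have huab : uIcc a b = Icc a b := uIcc_of_le (le_of_lt hab)
  -- continuity of f, f'
  have hfc : ContinuousOn f (Icc a b) := fun t ht =>
    ((hd1 t (hsub ht)).continuousAt).continuousWithinAt
  -- integrabilities
  have hfint : IntervalIntegrable f volume a b := (hfc.mono (by rw [huab])).intervalIntegrable
  have hfint1 : IntervalIntegrable f volume a m :=
    hfint.mono_set (by rw [huam, huab]; exact hIccm1)
  have hfint2 : IntervalIntegrable f volume m b :=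
    hfint.mono_set (by rw [humb, huab]; exact hIccm2)
  have hint1 : IntervalIntegrable f'' volume a m :=
    hint.mono_set (by rw [huam, huab]; exact hIccm1)
  have hint2 : IntervalIntegrable f'' volume m b :=
    hint.mono_set (by rw [humb, huab]; exact hIccm2)
  have hK1int : IntervalIntegrable (fun t => K1 t * f'' t) volume a m :=
    hint1.continuousOn_mul hK1c.continuousOn
  have hK2int : IntervalIntegrable (fun t => K2 t * f'' t) volume m b :=
    hint2.continuousOn_mul hK2c.continuousOn
  -- derivative of K1, K2
  have hK1d : ∀ t : ℝ, HasDerivAt K1 ((t - a) - w) t := by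
    intro t
    have h1 : HasDerivAt (fun t : ℝ => t - a) 1 t := (hasDerivAt_id t).sub_const a
    have := ((h1.pow 2).div_const 2).sub (h1.const_mul w)
    rw [hK1def]
    refine this.congr_deriv ?_
    push_cast
    ring
  have hK2d : ∀ t : ℝ, HasDerivAt K2 (-(b - t) + w) t := by
    intro t
    have h1 : HasDerivAt (fun t : ℝ => b - t) (-1) t := (hasDerivAt_id t).const_sub b
    have := ((h1.pow 2).div_const 2).sub (h1.const_mul w)
    rw [hK2def]
    refine this.congr_deriv ?_
    push_cast
    ring
  -- FTC on [a,m]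
  have hFTC1 : ∫ t in a..m, (K1 t * f'' t - f t) =
      (K1 m * f' m - ((m - a) - w) * f m) - (K1 a * f' a - ((a - a) - w) * f a) := by
    refine intervalIntegral.integral_eq_sub_of_hasDerivAt
      (f := fun t => K1 t * f' t - ((t - a) - w) * f t) ?_ ?_
    · intro t ht
      rw [huam] at ht
      have htcd : t ∈ Ioo c d := hsub (hIccm1 ht)
      have h1 := hd1 t htcd
      have h2 := hd2 t htcd
      have hk := hK1d t
      have hk' : HasDerivAt (fun t : ℝ => (t - a) - w) 1 t := by
        simpa using ((hasDerivAt_id t).sub_const a).sub_const w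
      have := (hk.mul h2).sub (hk'.mul h1)
      refine this.congr_deriv ?_
      ring
    · exact hK1int.sub hfint1
  have hFTC2 : ∫ t in m..b, (K2 t * f'' t - f t) =
      (K2 b * f' b - (w - (b - b)) * f b) - (K2 m * f' m - (w - (b - m)) * f m) := by
    refine intervalIntegral.integral_eq_sub_of_hasDerivAt
      (f := fun t => K2 t * f' t - (w - (b - t)) * f t) ?_ ?_
    · intro t ht
      rw [humb] at ht
      have htcd : t ∈ Ioo c d := hsub (hIccm2 ht)
      have h1 := hd1 t htcd
      have h2 := hd2 t htcd
      have hk := hK2d t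
      have hk' : HasDerivAt (fun t : ℝ => w - (b - t)) 1 t := by
        simpa using ((hasDerivAt_id t).const_sub b).const_sub w
      have := (hk.mul h2).sub (hk'.mul h1)
      refine this.congr_deriv ?_
      ring
    · exact hK2int.sub hfint2
  rw [intervalIntegral.integral_sub hK1int hfint1] at hFTC1
  rw [intervalIntegral.integral_sub hK2int hfint2] at hFTC2
  have hsplit : (∫ t in a..m, f t) + ∫ t in m..b, f t = ∫ t in a..b, f t :=
    intervalIntegral.integral_add_adjacent_intervals hfint1 hfint2
  -- the main identity
  have hK1a : K1 a = 0 := by simp [hK1def]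
  have hK1m : K1 m = (b - a) ^ 2 / 8 - w * (b - a) / 2 := by
    simp only [hK1def, hmdef]; ring
  have hK2b : K2 b = 0 := by simp [hK2def]
  have hK2m : K2 m = (b - a) ^ 2 / 8 - w * (b - a) / 2 := by
    simp only [hK2def, hmdef]; ring
  have hiden : (∫ t in a..b, f t)
      - (s2 / 8 * f a + (1 - s2 / 4) * f m + s2 / 8 * f b) * (b - a)
      = (∫ t in a..m, K1 t * f'' t) + ∫ t in m..b, K2 t * f'' t := by
    have e1 := hFTC1
    have e2 := hFTC2
    rw [hK1a, hK1m] at e1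
    rw [hK2b, hK2m] at e2
    rw [hmdef] at e1 e2 hsplit ⊢
    rw [hwdef] at e1 e2
    linear_combination -e1 - e2 - hsplit
  -- sSup facts
  set M : ℝ := sSup ((fun t => |f'' t|) '' Icc a b) with hMdef
  have hbdd : BddAbove ((fun t => |f'' t|) '' Icc a b) := by
    refine ⟨M0, ?_⟩
    rintro y ⟨t, ht, rfl⟩
    exact hM0 t (hsub ht)
  have hMb : ∀ t ∈ Icc a b, |f'' t| ≤ M := fun t ht => le_csSup hbdd ⟨t, ht, rfl⟩
  -- antiderivatives of the kernels
  have hP1 : ∀ x y : ℝ, (∫ t in x..y, K1 t)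
      = ((y - a) ^ 3 / 6 - w * ((y - a) ^ 2 / 2)) - ((x - a) ^ 3 / 6 - w * ((x - a) ^ 2 / 2)) := by
    intro x y
    refine intervalIntegral.integral_eq_sub_of_hasDerivAt
      (f := fun t => (t - a) ^ 3 / 6 - w * ((t - a) ^ 2 / 2)) ?_ (hK1c.intervalIntegrable x y)
    intro t _
    have h1 : HasDerivAt (fun t : ℝ => t - a) 1 t := (hasDerivAt_id t).sub_const a
    have := ((h1.pow 3).div_const 6).sub (((h1.pow 2).div_const 2).const_mul w)
    refine this.congr_deriv ?_
    simp only [hK1def]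
    push_cast
    ring
  have hP2 : ∀ x y : ℝ, (∫ t in x..y, K2 t)
      = (-((b - y) ^ 3 / 6) + w * ((b - y) ^ 2 / 2)) - (-((b - x) ^ 3 / 6) + w * ((b - x) ^ 2 / 2)) := by
    intro x y
    refine intervalIntegral.integral_eq_sub_of_hasDerivAt
      (f := fun t => -((b - t) ^ 3 / 6) + w * ((b - t) ^ 2 / 2)) ?_ (hK2c.intervalIntegrable x y)
    intro t _
    have h1 : HasDerivAt (fun t : ℝ => b - t) (-1) t := (hasDerivAt_id t).const_sub b
    have := (((h1.pow 3).div_const 6).neg).add (((h1.pow 2).div_const 2).const_mul w)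
    refine this.congr_deriv ?_
    simp only [hK2def]
    push_cast
    ring
  -- |K1| integral
  have hI1 : (∫ t in a..m, |K1 t|) = (2 - s2) / 96 * (b - a) ^ 3 := by
    have hsp : (∫ t in a..p, |K1 t|) + ∫ t in p..m, |K1 t| = ∫ t in a..m, |K1 t| :=
      intervalIntegral.integral_add_adjacent_intervals
        ((hK1c.abs).intervalIntegrable _ _) ((hK1c.abs).intervalIntegrable _ _)
    have e1 : (∫ t in a..p, |K1 t|) = ∫ t in a..p, -K1 t := by
      refine intervalIntegral.integral_congr fun t ht => ?_
      rw [uIcc_of_le hap] at ht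
      refine abs_of_nonpos ?_
      simp only [hK1def]
      have h1 : 0 ≤ t - a := by linarith [ht.1]
      have h2 : t - a ≤ 2 * w := by have := ht.2; rw [hpdef] at this; linarith
      have h3 : (t - a) ^ 2 / 2 - w * (t - a) = (t - a) * ((t - a) / 2 - w) := by ring
      rw [h3]
      exact mul_nonpos_iff.mpr (Or.inl ⟨h1, by linarith⟩)
    have e2 : (∫ t in p..m, |K1 t|) = ∫ t in p..m, K1 t := by
      refine intervalIntegral.integral_congr fun t ht => ?_
      rw [uIcc_of_le hpm] at ht
      refine abs_of_nonneg ?_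
      simp only [hK1def]
      have h2 : 2 * w ≤ t - a := by have := ht.1; rw [hpdef] at this; linarith
      have h3 : (t - a) ^ 2 / 2 - w * (t - a) = (t - a) * ((t - a) / 2 - w) := by ring
      rw [h3]
      exact mul_nonneg (by linarith) (by linarith)
    rw [← hsp, e1, e2, intervalIntegral.integral_neg, hP1 a p, hP1 p m]
    rw [hpdef, hmdef, hwdef]
    linear_combination (s2 * (b - a) ^ 3 / 384) * hs2
  -- |K2| integral
  have hI2 : (∫ t in m..b, |K2 t|) = (2 - s2) / 96 * (b - a) ^ 3 := by
    have hsp : (∫ t in m..q, |K2 t|) + ∫ t in q..b, |K2 t| = ∫ t in m..b, |K2 t| :=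
      intervalIntegral.integral_add_adjacent_intervals
        ((hK2c.abs).intervalIntegrable _ _) ((hK2c.abs).intervalIntegrable _ _)
    have e1 : (∫ t in m..q, |K2 t|) = ∫ t in m..q, K2 t := by
      refine intervalIntegral.integral_congr fun t ht => ?_
      rw [uIcc_of_le hmq] at ht
      refine abs_of_nonneg ?_
      simp only [hK2def]
      have h2 : 2 * w ≤ b - t := by have := ht.2; rw [hqdef] at this; linarith
      have h3 : (b - t) ^ 2 / 2 - w * (b - t) = (b - t) * ((b - t) / 2 - w) := by ring
      rw [h3]
      exact mul_nonneg (by linarith) (by linarith)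
    have e2 : (∫ t in q..b, |K2 t|) = ∫ t in q..b, -K2 t := by
      refine intervalIntegral.integral_congr fun t ht => ?_
      rw [uIcc_of_le hqb] at ht
      refine abs_of_nonpos ?_
      simp only [hK2def]
      have h1 : 0 ≤ b - t := by linarith [ht.2]
      have h2 : b - t ≤ 2 * w := by have := ht.1; rw [hqdef] at this; linarith
      have h3 : (b - t) ^ 2 / 2 - w * (b - t) = (b - t) * ((b - t) / 2 - w) := by ring
      rw [h3]
      exact mul_nonpos_iff.mpr (Or.inl ⟨h1, by linarith⟩)
    rw [← hsp, e1, e2, intervalIntegral.integral_neg, hP2 m q, hP2 q b]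
    rw [hqdef, hmdef, hwdef]
    linear_combination (s2 * (b - a) ^ 3 / 384) * hs2
  -- bounds on the two error pieces
  have hb1 : |∫ t in a..m, K1 t * f'' t| ≤ (2 - s2) / 96 * (b - a) ^ 3 * M := by
    calc |∫ t in a..m, K1 t * f'' t| ≤ ∫ t in a..m, |K1 t * f'' t| :=
          intervalIntegral.abs_integral_le_integral_abs ham
      _ ≤ ∫ t in a..m, |K1 t| * M := by
          refine intervalIntegral.integral_mono_on ham hK1int.abs
            ((hK1c.abs.mul continuous_const).intervalIntegrable _ _) fun t ht => ?_
          rw [abs_mul]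
          exact mul_le_mul_of_nonneg_left (hMb t (hIccm1 ht)) (abs_nonneg _)
      _ = (∫ t in a..m, |K1 t|) * M := intervalIntegral.integral_mul_const M _
      _ = (2 - s2) / 96 * (b - a) ^ 3 * M := by rw [hI1]
  have hb2 : |∫ t in m..b, K2 t * f'' t| ≤ (2 - s2) / 96 * (b - a) ^ 3 * M := by
    calc |∫ t in m..b, K2 t * f'' t| ≤ ∫ t in m..b, |K2 t * f'' t| :=
          intervalIntegral.abs_integral_le_integral_abs hmb
      _ ≤ ∫ t in m..b, |K2 t| * M := by
          refine intervalIntegral.integral_mono_on hmb hK2int.abs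
            ((hK2c.abs.mul continuous_const).intervalIntegrable _ _) fun t ht => ?_
          rw [abs_mul]
          exact mul_le_mul_of_nonneg_left (hMb t (hIccm2 ht)) (abs_nonneg _)
      _ = (∫ t in m..b, |K2 t|) * M := intervalIntegral.integral_mul_const M _
      _ = (2 - s2) / 96 * (b - a) ^ 3 * M := by rw [hI2]
  rw [hiden]
  calc |(∫ t in a..m, K1 t * f'' t) + ∫ t in m..b, K2 t * f'' t|
      ≤ |∫ t in a..m, K1 t * f'' t| + |∫ t in m..b, K2 t * f'' t| := abs_add_le _ _
    _ ≤ (2 - s2) / 96 * (b - a) ^ 3 * M + (2 - s2) / 96 * (b - a) ^ 3 * M := add_le_add hb1 hb2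
    _ = (2 - s2) / 48 * M * (b - a) ^ 3 := by ring
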